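/- Let n ≥ 1 and λ ∈ ℝ, and let ψ : ℝ → ℂ be smooth on (−π, π), even, with ψ(0) = 1, satisfying ψ″(r) + 2n·(cos r/sin r)·ψ′(r) = (λ² + n²)·ψ(r) for all 0 < |r| < π. Let D̃* = L̃^n be the n-fold iterate of (L̃g)(r) = −(1/(2π))·g′(r)/sin r. Then for all r with 0 < |r| < π: (D̃*(cosh(λ·)))(r) = c_{λ,n}·ψ(r), where c_{λ,n} = (−2π)^{−n}·∏_{k=0}^{n−1} (λ² + k²)/(2k+1). -/

import Mathlib

/-- The operator `L̃` given by `(L̃ g)(r) = -(1/(2π)) g'(r)/sin r`. -/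
noncomputable def Lsph (g : ℝ → ℂ) : ℝ → ℂ :=
  fun r => -(1 / (2 * (Real.pi : ℂ))) * deriv g r / (Real.sin r : ℂ)

/-- `c_{λ,n} = (-2π)^{-n} ∏_{k=0}^{n-1} (λ² + k²)/(2k+1)`. -/
noncomputable def cln (n : ℕ) (lam : ℝ) : ℝ :=
  ((-(2 * Real.pi)) ^ n)⁻¹ * ∏ k ∈ Finset.range n, (lam ^ 2 + (k : ℝ) ^ 2) / (2 * k + 1)

open Real Set Filter Topology

local notation "II" => Set.Ioo (-Real.pi) Real.pi

lemma sinII {x : ℝ} (hx : x ∈ II) (hx0 : x ≠ 0) : (Real.sin x : ℂ) ≠ 0 := by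
  have : Real.sin x ≠ 0 := by
    intro h
    exact hx0 ((Real.sin_eq_zero_iff_of_lt_of_lt hx.1 hx.2).mp h)
  exact_mod_cast this


lemma hII_open : IsOpen II := isOpen_Ioo
lemma hII_zero : (0:ℝ) ∈ II := by
  constructor
  · linarith [Real.pi_pos]
  · exact Real.pi_pos

lemma anaS (x : ℝ) : AnalyticAt ℝ (fun r : ℝ => (Real.sin r : ℂ)) x := by
  have h : AnalyticAt ℝ Complex.sin ((x:ℝ):ℂ) :=
    (Complex.differentiable_sin.analyticAt _).restrictScalars
  have h2 : AnalyticAt ℝ (fun r : ℝ => ((r:ℝ):ℂ)) x := Complex.ofRealCLM.analyticAt x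
  have := AnalyticAt.comp (f := fun r : ℝ => ((r:ℝ):ℂ)) h h2
  refine this.congr ?_
  filter_upwards with r
  simp [Function.comp, Complex.ofReal_sin]

lemma hasDerivS (x : ℝ) : HasDerivAt (fun r : ℝ => (Real.sin r : ℂ)) ((Real.cos x : ℂ)) x :=
  (Real.hasDerivAt_sin x).ofReal_comp

lemma hasDerivC (x : ℝ) : HasDerivAt (fun r : ℝ => (Real.cos r : ℂ)) (-(Real.sin x : ℂ)) x := by
  simpa using (Real.hasDerivAt_cos x).ofReal_comp

lemma factor_zero {F : ℝ → ℂ} (hF : AnalyticAt ℝ F 0) (h0 : F 0 = 0) :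
    ∃ q : ℝ → ℂ, AnalyticAt ℝ q 0 ∧ ∀ᶠ r in 𝓝[≠] (0:ℝ), q r = F r / r := by
  rcases eq_or_ne (analyticOrderAt F 0) ⊤ with ht | ht
  · have hz : ∀ᶠ r in 𝓝 (0:ℝ), F r = 0 := analyticOrderAt_eq_top.mp ht
    refine ⟨fun _ => 0, analyticAt_const, ?_⟩
    filter_upwards [nhdsWithin_le_nhds hz] with r hr
    simp [hr]
  · lift analyticOrderAt F 0 to ℕ using ht with m hm
    obtain ⟨g, hg, hg0, hfg⟩ := (hF.analyticOrderAt_eq_natCast (n := m)).mp hm.symm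
    have hm1 : 1 ≤ m := by
      rcases Nat.eq_zero_or_pos m with h | h
      · exfalso; apply hg0
        have := hfg.self_of_nhds
        simpa [h, h0] using this.symm
      · exact h
    refine ⟨fun r => (r:ℂ) ^ (m-1) * g r, ((Complex.ofRealCLM.analyticAt 0).pow _).mul hg, ?_⟩
    filter_upwards [nhdsWithin_le_nhds hfg, self_mem_nhdsWithin] with r hr hr0
    have hr0' : (r:ℂ) ≠ 0 := by exact_mod_cast hr0
    rw [hr]
    simp only [sub_zero, smul_eq_mul, Complex.real_smul]
    rw [eq_div_iff hr0', show m = (m-1)+1 by omega]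
    push_cast
    ring

/-- slope limit: if `F 0 = 0` and `HasDerivAt F d 0` then `F r / r → d` on punctured nbhd -/
lemma slope_lim {F : ℝ → ℂ} {d : ℂ} (h : HasDerivAt F d 0) (h0 : F 0 = 0) :
    Tendsto (fun r : ℝ => F r / r) (𝓝[≠] (0:ℝ)) (𝓝 d) := by
  have := hasDerivAt_iff_tendsto_slope.mp h
  refine this.congr' ?_
  filter_upwards [self_mem_nhdsWithin] with r hr
  simp [slope_def_module, h0, div_eq_inv_mul, Complex.real_smul]

lemma sin_div_lim : Tendsto (fun r : ℝ => (Real.sin r : ℂ) / r) (𝓝[≠] (0:ℝ)) (𝓝 1) := by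
  have := slope_lim (F := fun r : ℝ => (Real.sin r : ℂ)) (d := (Real.cos 0 : ℂ)) (hasDerivS 0) (by simp)
  simpa using this

/-- corrected quotient by sin -/
lemma corrected {F : ℝ → ℂ} (hF : AnalyticOnNhd ℝ F II) (h0 : F 0 = 0) :
    ∃ Q : ℝ → ℂ, AnalyticOnNhd ℝ Q II ∧
      (∀ r ∈ II, r ≠ 0 → Q r = F r / (Real.sin r : ℂ)) ∧ Q 0 = deriv F 0 := by
  obtain ⟨q, hq, hqe⟩ := factor_zero (hF 0 hII_zero) h0
  obtain ⟨qS, hqS, hqSe⟩ := factor_zero (anaS 0) (by simp)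
  -- qS 0 = 1
  have hqS1 : qS 0 = 1 := by
    have h1 : Tendsto qS (𝓝[≠] (0:ℝ)) (𝓝 (qS 0)) :=
      (hqS.continuousAt.continuousWithinAt).tendsto
    have h2 : Tendsto qS (𝓝[≠] (0:ℝ)) (𝓝 1) :=
      sin_div_lim.congr' (hqSe.mono fun r h => h.symm)
    exact tendsto_nhds_unique h1 h2
  -- q 0 = deriv F 0
  have hq0 : q 0 = deriv F 0 := by
    have hd : HasDerivAt F (deriv F 0) 0 :=
      ((hF 0 hII_zero).differentiableAt).hasDerivAt
    have h1 : Tendsto q (𝓝[≠] (0:ℝ)) (𝓝 (q 0)) :=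
      (hq.continuousAt.continuousWithinAt).tendsto
    have h2 : Tendsto q (𝓝[≠] (0:ℝ)) (𝓝 (deriv F 0)) :=
      (slope_lim hd h0).congr' (hqe.mono fun r h => h.symm)
    exact tendsto_nhds_unique h1 h2
  classical
  refine ⟨fun r => if r = 0 then q 0 else F r / (Real.sin r : ℂ), ?_, ?_, by simp [hq0]⟩
  · intro x hx
    rcases eq_or_ne x 0 with rfl | hx0
    · -- near 0 it agrees with q / qS
      have hev : ∀ᶠ r in 𝓝 (0:ℝ), (if r = 0 then q 0 else F r / (Real.sin r : ℂ)) = q r / qS r := by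
        have hmem : ∀ᶠ r in 𝓝 (0:ℝ), r ∈ II := hII_open.mem_nhds hII_zero
        have h1 : ∀ᶠ r in 𝓝 (0:ℝ), r ≠ 0 → q r = F r / r := by
          rw [eventually_nhdsWithin_iff] at hqe
          filter_upwards [hqe] with r hr hr0; exact hr hr0
        have h2 : ∀ᶠ r in 𝓝 (0:ℝ), r ≠ 0 → qS r = (Real.sin r : ℂ) / r := by
          rw [eventually_nhdsWithin_iff] at hqSe
          filter_upwards [hqSe] with r hr hr0; exact hr hr0
        filter_upwards [h1, h2] with r h1 h2
        rcases eq_or_ne r 0 with rfl | hr0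
        · simp [hqS1]
        · have hrC : (r:ℂ) ≠ 0 := by exact_mod_cast hr0
          simp only [hr0, if_false, h1 hr0, h2 hr0]
          rcases eq_or_ne (Real.sin r) 0 with h | h
          · simp [h]
          · have hsC : (Real.sin r : ℂ) ≠ 0 := by exact_mod_cast h
            field_simp
      exact (((hq.div hqS) (by simp [hqS1])).congr (hev.mono fun r h => h.symm))
    · -- away from 0
      have hsin : (Real.sin x : ℂ) ≠ 0 := by
        have : Real.sin x ≠ 0 := by
          intro h; exact hx0 ((Real.sin_eq_zero_iff_of_lt_of_lt hx.1 hx.2).mp h)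
        exact_mod_cast this
      have hev : ∀ᶠ r in 𝓝 x, (if r = 0 then q 0 else F r / (Real.sin r : ℂ)) = F r / (Real.sin r : ℂ) := by
        have : ∀ᶠ r in 𝓝 x, r ≠ 0 := isOpen_ne.mem_nhds hx0
        filter_upwards [this] with r hr; simp [hr]
      exact (((hF x hx).div (anaS x) hsin).congr (hev.mono fun r h => h.symm))
  · intro r _ hr0; simp [hr0]



lemma neg_memII {r : ℝ} (hr : r ∈ II) : -r ∈ II := by
  constructor <;> [linarith [hr.2]; linarith [hr.1]]

/-- derivative of an even function on II is odd -/
lemma deriv_odd {F : ℝ → ℂ} (hF : AnalyticOnNhd ℝ F II)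
    (he : ∀ r ∈ II, F (-r) = F r) : ∀ r ∈ II, deriv F (-r) = - deriv F r := by
  intro r hr
  have hev : (fun s => F (-s)) =ᶠ[𝓝 r] F := by
    filter_upwards [hII_open.mem_nhds hr] with s hs
    exact he s hs
  have h1 : deriv (fun s => F (-s)) r = deriv F r := hev.deriv_eq
  rw [deriv_comp_neg] at h1
  linear_combination -h1

lemma step (lam : ℝ) (m : ℕ) (F : ℝ → ℂ)
    (hFa : AnalyticOnNhd ℝ F II)
    (hFe : ∀ r ∈ II, F (-r) = F r)
    (hode : ∀ r ∈ II, r ≠ 0 →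
      deriv (deriv F) r + 2*(m:ℂ)*((Real.cos r:ℂ)/(Real.sin r:ℂ)) * deriv F r
        = ((lam:ℂ)^2+(m:ℂ)^2) * F r) :
    ∃ G : ℝ → ℂ, AnalyticOnNhd ℝ G II ∧ (∀ r ∈ II, G (-r) = G r) ∧
      (∀ r ∈ II, r ≠ 0 → G r = -(1/(2*(Real.pi:ℂ))) * deriv F r / (Real.sin r:ℂ)) ∧
      G 0 = -(1/(2*(Real.pi:ℂ))) * (((lam:ℂ)^2+(m:ℂ)^2)/(2*(m:ℂ)+1)) * F 0 ∧
      (∀ r ∈ II, r ≠ 0 →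
        deriv (deriv G) r + 2*((m:ℂ)+1)*((Real.cos r:ℂ)/(Real.sin r:ℂ)) * deriv G r
          = ((lam:ℂ)^2+((m:ℂ)+1)^2) * G r) := by
  set c : ℂ := -(1/(2*(Real.pi:ℂ))) with hc
  set ν : ℂ := (lam:ℂ)^2+(m:ℂ)^2 with hν
  set F1 : ℝ → ℂ := deriv F with hF1
  have hF1a : AnalyticOnNhd ℝ F1 II := hFa.deriv
  have hF1odd : ∀ r ∈ II, F1 (-r) = - F1 r := deriv_odd hFa hFe
  have hF10 : F1 0 = 0 := by
    have := hF1odd 0 hII_zero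
    simp only [neg_zero] at this
    linear_combination (1/2 : ℂ) * this
  obtain ⟨Q, hQa, hQeq, hQ0⟩ := corrected hF1a hF10
  set F2 : ℝ → ℂ := deriv F1 with hF2
  have hF2a : AnalyticOnNhd ℝ F2 II := hF1a.deriv
  set F3 : ℝ → ℂ := deriv F2 with hF3
  have hF3a : AnalyticOnNhd ℝ F3 II := hF2a.deriv
  -- the value of F2 at 0
  have hF20 : F2 0 = ν/(2*(m:ℂ)+1) * F 0 := by
    have hmem : ∀ᶠ s in 𝓝[≠] (0:ℝ), s ∈ II ∧ s ≠ 0 := by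
      rw [eventually_nhdsWithin_iff]
      filter_upwards [hII_open.mem_nhds hII_zero] with s hs hs0
      exact ⟨hs, hs0⟩
    have hd1 : HasDerivAt F1 (F2 0) 0 := ((hF1a 0 hII_zero).differentiableAt).hasDerivAt
    have t0 : Tendsto (fun s => F1 s / (Real.sin s : ℂ)) (𝓝[≠] (0:ℝ)) (𝓝 (F2 0)) := by
      have h1 : Tendsto (fun s : ℝ => (F1 s / s) / ((Real.sin s : ℂ) / s)) (𝓝[≠] (0:ℝ))
          (𝓝 (F2 0)) := by
        have h := (slope_lim hd1 hF10).div sin_div_lim one_ne_zero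
        rw [div_one] at h
        exact h
      refine h1.congr' ?_
      filter_upwards [self_mem_nhdsWithin] with s hs
      have hsC : (s:ℂ) ≠ 0 := by exact_mod_cast hs
      rcases eq_or_ne (Real.sin s) 0 with h | h
      · simp [h]
      · have hsinC : (Real.sin s : ℂ) ≠ 0 := by exact_mod_cast h
        field_simp
    have t1 : Tendsto (fun s => F2 s + 2*(m:ℂ)*(Real.cos s:ℂ) * (F1 s / (Real.sin s:ℂ)))
        (𝓝[≠] (0:ℝ)) (𝓝 (F2 0 + 2*(m:ℂ)*1*(F2 0))) := by
      have hcF2 : Tendsto F2 (𝓝[≠] (0:ℝ)) (𝓝 (F2 0)) :=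
        ((hF2a 0 hII_zero).continuousAt.continuousWithinAt).tendsto
      have hccos : Tendsto (fun s : ℝ => (Real.cos s : ℂ)) (𝓝[≠] (0:ℝ)) (𝓝 1) := by
        have : ContinuousAt (fun s : ℝ => (Real.cos s : ℂ)) 0 :=
          Complex.continuous_ofReal.continuousAt.comp Real.continuous_cos.continuousAt
        simpa using this.continuousWithinAt.tendsto
      exact hcF2.add ((tendsto_const_nhds.mul hccos).mul t0)
    have t2 : Tendsto (fun s => F2 s + 2*(m:ℂ)*(Real.cos s:ℂ) * (F1 s / (Real.sin s:ℂ)))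
        (𝓝[≠] (0:ℝ)) (𝓝 (ν * F 0)) := by
      have hcF : Tendsto (fun s => ν * F s) (𝓝[≠] (0:ℝ)) (𝓝 (ν * F 0)) :=
        tendsto_const_nhds.mul ((hFa 0 hII_zero).continuousAt.continuousWithinAt).tendsto
      refine hcF.congr' ?_
      filter_upwards [hmem] with s ⟨hs, hs0⟩
      have := hode s hs hs0
      rw [← this]
      ring
    have key : F2 0 + 2*(m:ℂ)*1*(F2 0) = ν * F 0 := tendsto_nhds_unique t1 t2
    have h2m : (2*(m:ℂ)+1) ≠ 0 := by
      have : (0:ℝ) < 2*(m:ℝ)+1 := by positivity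
      intro h
      have := congrArg Complex.re h
      push_cast at this
      simp at this
      linarith
    field_simp
    linear_combination key
  refine ⟨fun r => c * Q r, fun x hx => analyticAt_const.mul (hQa x hx), ?_, ?_, ?_, ?_⟩
  · -- evenness
    intro r hr
    rcases eq_or_ne r 0 with rfl | hr0
    · simp
    · have h1 := hQeq r hr hr0
      have h2 := hQeq (-r) (neg_memII hr) (neg_ne_zero.mpr hr0)
      show c * Q (-r) = c * Q r
      rw [h2, h1, hF1odd r hr]
      push_cast [Real.sin_neg]
      rw [neg_div_neg_eq]
  · -- formula
    intro r hr hr0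
    show c * Q r = c * deriv F r / (Real.sin r : ℂ)
    rw [hQeq r hr hr0, ← hF1]
    ring
  · -- value at 0
    show c * Q 0 = c * (ν/(2*(m:ℂ)+1)) * F 0
    rw [hQ0, hF20]
    ring
  · -- the ODE
    intro r hr hr0
    have hU : ∀ᶠ s in 𝓝 r, s ∈ II ∧ s ≠ 0 := by
      filter_upwards [hII_open.mem_nhds hr, isOpen_ne.mem_nhds hr0] with s h1 h2
      exact ⟨h1, h2⟩
    -- first derivative of G on the punctured interval
    have hGd : ∀ s, s ∈ II → s ≠ 0 → HasDerivAt (fun t => c * Q t)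
        (c * ((F2 s * (Real.sin s:ℂ) - F1 s * (Real.cos s:ℂ))/(Real.sin s:ℂ)^2)) s := by
      intro s hs hs0
      have hUs : ∀ᶠ t in 𝓝 s, t ∈ II ∧ t ≠ 0 := by
        filter_upwards [hII_open.mem_nhds hs, isOpen_ne.mem_nhds hs0] with t h1 h2
        exact ⟨h1, h2⟩
      have hev : (fun t => c * Q t) =ᶠ[𝓝 s] (fun t => c * (F1 t / (Real.sin t:ℂ))) := by
        filter_upwards [hUs] with t ⟨ht, ht0⟩
        rw [hQeq t ht ht0]
      have hdiv : HasDerivAt (fun t => F1 t / (Real.sin t:ℂ))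
          ((F2 s * (Real.sin s:ℂ) - F1 s * (Real.cos s:ℂ))/(Real.sin s:ℂ)^2) s :=
        HasDerivAt.div ((hF1a s hs).differentiableAt).hasDerivAt (hasDerivS s) (sinII hs hs0)
      exact (hdiv.const_mul c).congr_of_eventuallyEq hev
    have hderivG : ∀ s, s ∈ II → s ≠ 0 → deriv (fun t => c * Q t) s
        = c * ((F2 s * (Real.sin s:ℂ) - F1 s * (Real.cos s:ℂ))/(Real.sin s:ℂ)^2) :=
      fun s hs hs0 => (hGd s hs hs0).deriv
    set S : ℂ := (Real.sin r : ℂ) with hS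
    set C : ℂ := (Real.cos r : ℂ) with hC
    have hSne : S ≠ 0 := sinII hr hr0
    have hpyth : S^2 + C^2 = 1 := by
      rw [hS, hC]
      exact_mod_cast Real.sin_sq_add_cos_sq r
    -- second derivative of G at r
    have hev2 : deriv (fun t => c * Q t) =ᶠ[𝓝 r]
        (fun s => c * ((F2 s * (Real.sin s:ℂ) - F1 s * (Real.cos s:ℂ))/(Real.sin s:ℂ)^2)) := by
      filter_upwards [hU] with s ⟨hs, hs0⟩
      exact hderivG s hs hs0
    have hnum : HasDerivAt (fun s => F2 s * (Real.sin s:ℂ) - F1 s * (Real.cos s:ℂ))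
        ((F3 r * S + F2 r * C) - (F2 r * C + F1 r * (-S))) r :=
      (HasDerivAt.mul ((hF2a r hr).differentiableAt).hasDerivAt (hasDerivS r)).sub
        (HasDerivAt.mul ((hF1a r hr).differentiableAt).hasDerivAt (hasDerivC r))
    have hden : HasDerivAt (fun s => (Real.sin s:ℂ)^2) (C * S + S * C) r := by
      have h := (hasDerivS r).mul (hasDerivS r)
      have h2 : (fun s => (Real.sin s:ℂ)^2) = fun s => (Real.sin s:ℂ) * (Real.sin s:ℂ) :=
        funext fun s => sq (Real.sin s : ℂ)
      rw [h2, hS, hC]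
      exact h
    have hPhi : HasDerivAt
        (fun s => c * ((F2 s * (Real.sin s:ℂ) - F1 s * (Real.cos s:ℂ))/(Real.sin s:ℂ)^2))
        (c * ((((F3 r * S + F2 r * C) - (F2 r * C + F1 r * (-S))) * S^2
            - (F2 r * S - F1 r * C) * (C * S + S * C)) / (S^2)^2)) r :=
      (hnum.div hden (pow_ne_zero 2 hSne)).const_mul c
    have hdd : deriv (deriv (fun t => c * Q t)) r
        = c * ((((F3 r * S + F2 r * C) - (F2 r * C + F1 r * (-S))) * S^2
            - (F2 r * S - F1 r * C) * (C * S + S * C)) / (S^2)^2) := by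
      rw [hev2.deriv_eq]
      exact hPhi.deriv
    -- derivative of the ODE identity
    have hWd : HasDerivAt
        (fun s => F2 s + 2*(m:ℂ)*((Real.cos s:ℂ)/(Real.sin s:ℂ)) * F1 s - ν * F s)
        (F3 r + ((2*(m:ℂ)*(((-S)*S - C*C)/S^2)) * F1 r + (2*(m:ℂ)*(C/S)) * F2 r) - ν * F1 r) r := by
      have hcot : HasDerivAt (fun s => (Real.cos s:ℂ)/(Real.sin s:ℂ)) (((-S)*S - C*C)/S^2) r :=
        HasDerivAt.div (hasDerivC r) (hasDerivS r) hSne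
      have h1 : HasDerivAt (fun s => 2*(m:ℂ)*((Real.cos s:ℂ)/(Real.sin s:ℂ)))
          (2*(m:ℂ)*(((-S)*S - C*C)/S^2)) r := hcot.const_mul _
      have h2 := h1.mul ((hF1a r hr).differentiableAt).hasDerivAt
      have h3 := ((hF2a r hr).differentiableAt).hasDerivAt
      have h4 := (((hFa r hr).differentiableAt).hasDerivAt).const_mul ν
      exact (h3.add h2).sub h4
    have hω : F3 r + ((2*(m:ℂ)*(((-S)*S - C*C)/S^2)) * F1 r + (2*(m:ℂ)*(C/S)) * F2 r) - ν * F1 r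
        = 0 := by
      have hW0 : (fun s => F2 s + 2*(m:ℂ)*((Real.cos s:ℂ)/(Real.sin s:ℂ)) * F1 s - ν * F s)
          =ᶠ[𝓝 r] (fun _ => (0:ℂ)) := by
        filter_upwards [hU] with s ⟨hs, hs0⟩
        rw [sub_eq_zero]
        exact hode s hs hs0
      rw [← hWd.deriv, hW0.deriv_eq]
      simp
    -- put everything together
    show deriv (deriv (fun t => c * Q t)) r + 2*((m:ℂ)+1)*(C/S) * deriv (fun t => c * Q t) r
        = ((lam:ℂ)^2+((m:ℂ)+1)^2) * ((fun t => c * Q t) r)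
    rw [hdd, hderivG r hr hr0]
    show _ = ((lam:ℂ)^2+((m:ℂ)+1)^2) * (c * Q r)
    rw [hQeq r hr hr0]
    have hν' : ((lam:ℂ)^2+((m:ℂ)+1)^2) = ν + 2*(m:ℂ) + 1 := by rw [hν]; ring
    rw [hν']
    rw [← hS, ← hC]
    clear_value S C
    set f1 := F1 r with hf1; set f2 := F2 r with hf2; set f3 := F3 r with hf3
    set q := Q r with hq
    clear_value f1 f2 f3 q c ν
    have hh : f3 = ν * f1 - (2*(m:ℂ)*(((-S)*S - C*C)/S^2) * f1 + 2*(m:ℂ)*(C/S) * f2) := by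
      linear_combination hω
    rw [hh]
    have hC2 : C^2 = 1 - S^2 := by linear_combination hpyth
    field_simp
    have hss : S^10 * S⁻¹^10 = 1 := by
      rw [← mul_pow, mul_inv_cancel₀ hSne, one_pow]
    linear_combination



lemma cln_succ (m : ℕ) (lam : ℝ) :
    (cln (m+1) lam : ℂ)
      = -(1/(2*(Real.pi:ℂ))) * (((lam:ℂ)^2+(m:ℂ)^2)/(2*(m:ℂ)+1)) * (cln m lam : ℂ) := by
  have hr : cln (m+1) lam
      = -(1/(2*Real.pi)) * ((lam^2+(m:ℝ)^2)/(2*(m:ℝ)+1)) * cln m lam := by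
    unfold cln
    rw [Finset.prod_range_succ, pow_succ, mul_inv]
    have hπ : (2*Real.pi) ≠ 0 := by positivity
    field_simp
  rw [show ((cln (m+1) lam : ℝ) : ℂ) = ((-(1/(2*Real.pi)) * ((lam^2+(m:ℝ)^2)/(2*(m:ℝ)+1)) * cln m lam : ℝ) : ℂ) from congrArg _ hr]
  push_cast
  ring

lemma main_ind (lam : ℝ) (m : ℕ) : ∃ F : ℝ → ℂ,
    AnalyticOnNhd ℝ F II ∧
    (∀ r ∈ II, r ≠ 0 → Lsph^[m] (fun s => (Real.cosh (lam*s):ℂ)) r = F r) ∧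
    (∀ r ∈ II, F (-r) = F r) ∧
    F 0 = (cln m lam : ℂ) ∧
    (∀ r ∈ II, r ≠ 0 →
      deriv (deriv F) r + 2*(m:ℂ)*((Real.cos r:ℂ)/(Real.sin r:ℂ)) * deriv F r
        = ((lam:ℂ)^2+(m:ℂ)^2) * F r) := by
  induction m with
  | zero =>
      refine ⟨fun s => (Real.cosh (lam*s):ℂ), ?_, ?_, ?_, ?_, ?_⟩
      · intro x _
        have h : AnalyticAt ℝ Complex.cosh (((lam*x:ℝ)):ℂ) :=
          (Complex.differentiable_cosh.analyticAt _).restrictScalars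
        have h2 : AnalyticAt ℝ (fun r : ℝ => ((lam*r:ℝ):ℂ)) x :=
          (Complex.ofRealCLM.analyticAt _).comp (analyticAt_const.mul analyticAt_id)
        have h3 := AnalyticAt.comp (f := fun r : ℝ => ((lam*r:ℝ):ℂ)) h h2
        refine h3.congr ?_
        filter_upwards with r
        simp [Function.comp, Complex.ofReal_cosh]
      · intro r _ _; rfl
      · intro r _; simp [mul_neg, Real.cosh_neg]
      · simp [cln]
      · intro r hr hr0
        have hd : ∀ x : ℝ, HasDerivAt (fun s => (Real.cosh (lam*s):ℂ))
            ((lam * Real.sinh (lam*x) : ℝ) : ℂ) x := by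
          intro x
          have h0 : HasDerivAt (fun s : ℝ => lam * s) lam x := by
            simpa using (hasDerivAt_id x).const_mul lam
          have h1 := h0.cosh
          have := h1.ofReal_comp
          simpa [mul_comm] using this
        have hd1 : deriv (fun s => (Real.cosh (lam*s):ℂ))
            = fun x => ((lam * Real.sinh (lam*x) : ℝ) : ℂ) :=
          funext fun x => (hd x).deriv
        have hd2 : ∀ x : ℝ, HasDerivAt (fun x : ℝ => ((lam * Real.sinh (lam*x) : ℝ) : ℂ))
            ((lam * (lam * Real.cosh (lam*x)) : ℝ) : ℂ) x := by
          intro x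
          have h0 : HasDerivAt (fun s : ℝ => lam * s) lam x := by
            simpa using (hasDerivAt_id x).const_mul lam
          have h1 := (h0.sinh).const_mul lam
          have := h1.ofReal_comp
          simpa [mul_comm, mul_assoc, mul_left_comm] using this
        rw [hd1]
        rw [(hd2 r).deriv]
        push_cast
        ring
  | succ k ih =>
      obtain ⟨F, hFa, hFit, hFe, hF0, hFode⟩ := ih
      obtain ⟨G, hGa, hGe, hGf, hG0, hGode⟩ := step lam k F hFa hFe hFode
      refine ⟨G, hGa, ?_, hGe, ?_, ?_⟩
      · intro r hr hr0
        rw [Function.iterate_succ_apply']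
        have hev : Lsph^[k] (fun s => (Real.cosh (lam*s):ℂ)) =ᶠ[𝓝 r] F := by
          filter_upwards [hII_open.mem_nhds hr, isOpen_ne.mem_nhds hr0] with s h1 h2
          exact hFit s h1 h2
        show -(1 / (2 * (Real.pi : ℂ))) * deriv (Lsph^[k] (fun s => (Real.cosh (lam*s):ℂ))) r
            / (Real.sin r : ℂ) = G r
        rw [hev.deriv_eq, hGf r hr hr0]
      · rw [hG0, hF0, cln_succ]
      · intro r hr hr0
        have := hGode r hr hr0
        push_cast [← Complex.ofReal_sin, ← Complex.ofReal_cos]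
        exact this


set_option maxHeartbeats 1000000 in
lemma uniq (n : ℕ) (lam : ℝ) (u u' u'' : ℝ → ℂ)
    (hd1 : ∀ r ∈ II, HasDerivAt u (u' r) r)
    (hd2 : ∀ r ∈ II, HasDerivAt u' (u'' r) r)
    (hode : ∀ r : ℝ, 0 < r → r < Real.pi →
      u'' r = ((lam:ℂ)^2+(n:ℂ)^2) * u r
        - 2*(n:ℂ)*((Real.cos r:ℂ)/(Real.sin r:ℂ)) * u' r)
    (h0 : u 0 = 0) (h0' : u' 0 = 0) :
    ∀ r : ℝ, 0 ≤ r → r < Real.pi → u r = 0 := by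
  intro r₀ hr₀0 hr₀π
  set r₁ : ℝ := (r₀ + Real.pi)/2 with hr₁
  have hπ : 0 < Real.pi := Real.pi_pos
  have hr₁π : r₁ < Real.pi := by rw [hr₁]; linarith
  have hr₀r₁ : r₀ < r₁ := by rw [hr₁]; linarith
  have hr₁0 : 0 < r₁ := by rw [hr₁]; linarith
  have hIccII : Icc 0 r₁ ⊆ II := fun x hx => ⟨by linarith [hx.1], by linarith [hx.2]⟩
  have hs1 : 0 < Real.sin r₁ := Real.sin_pos_of_pos_of_lt_pi hr₁0 hr₁π
  set ν : ℝ := lam^2 + (n:ℝ)^2 with hν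
  set K : ℝ := (1 + ν) + 4*(n:ℝ)/Real.sin r₁ with hK
  set E : ℝ → ℝ := fun r => (u r).re^2 + (u r).im^2 + ((u' r).re^2 + (u' r).im^2) with hE
  set E' : ℝ → ℝ := fun r => 2*((u r).re*(u' r).re + (u r).im*(u' r).im)
      + 2*((u' r).re*(u'' r).re + (u' r).im*(u'' r).im) with hE'
  have hEd : ∀ r ∈ II, HasDerivAt E (E' r) r := by
    intro r hr
    have hre : HasDerivAt (fun s => (u s).re) ((u' r).re) r := by
      simpa [Function.comp_def] using Complex.reCLM.hasFDerivAt.comp_hasDerivAt r (hd1 r hr)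
    have him : HasDerivAt (fun s => (u s).im) ((u' r).im) r := by
      simpa [Function.comp_def] using Complex.imCLM.hasFDerivAt.comp_hasDerivAt r (hd1 r hr)
    have hre' : HasDerivAt (fun s => (u' s).re) ((u'' r).re) r := by
      simpa [Function.comp_def] using Complex.reCLM.hasFDerivAt.comp_hasDerivAt r (hd2 r hr)
    have him' : HasDerivAt (fun s => (u' s).im) ((u'' r).im) r := by
      simpa [Function.comp_def] using Complex.imCLM.hasFDerivAt.comp_hasDerivAt r (hd2 r hr)
    have := (((hre.mul hre).add (him.mul him)).add ((hre'.mul hre').add (him'.mul him')))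
    have h2 : (fun s => (u s).re * (u s).re + (u s).im * (u s).im
        + ((u' s).re * (u' s).re + (u' s).im * (u' s).im)) = E := by
      funext s; rw [hE]; ring
    rw [← h2]
    refine this.congr_deriv ?_
    rw [hE']; ring
  set f : ℝ → ℝ := fun r => E r * Real.exp (-K * r) with hf
  have hfd : ∀ r ∈ II, HasDerivAt f ((E' r - K * E r) * Real.exp (-K * r)) r := by
    intro r hr
    have hexp : HasDerivAt (fun s : ℝ => Real.exp (-K * s)) (Real.exp (-K*r) * (-K)) r := by
      have h0 : HasDerivAt (fun s : ℝ => -K * s) (-K) r := by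
        simpa using (hasDerivAt_id r).const_mul (-K)
      exact h0.exp
    have := (hEd r hr).mul hexp
    refine this.congr_deriv ?_
    ring
  -- the key differential inequality
  have hineq : ∀ r, 0 < r → r < r₁ → E' r ≤ K * E r := by
    intro r h1 h2
    have hrII : r ∈ II := ⟨by linarith, by linarith⟩
    have hs : 0 < Real.sin r := Real.sin_pos_of_pos_of_lt_pi h1 (by linarith)
    -- bound on the cotangent
    have hcot : -(Real.cos r / Real.sin r) ≤ 1 / Real.sin r₁ := by
      rcases le_or_gt 0 (Real.cos r) with hc | hc
      · have : 0 ≤ Real.cos r / Real.sin r := div_nonneg hc hs.le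
        have h3 : 0 ≤ 1 / Real.sin r₁ := by positivity
        linarith
      · have hrhalf : Real.pi/2 < r := by
          by_contra h
          push_neg at h
          exact absurd (Real.cos_nonneg_of_mem_Icc ⟨by linarith, h⟩) (not_le.mpr hc)
        have hsins : Real.sin r₁ ≤ Real.sin r := by
          have hdiff : Real.sin r₁ - Real.sin r
              = 2 * Real.sin ((r₁ - r)/2) * Real.cos ((r₁ + r)/2) := Real.sin_sub_sin r₁ r
          have hsin1 : 0 ≤ Real.sin ((r₁ - r)/2) :=
            Real.sin_nonneg_of_nonneg_of_le_pi (by linarith) (by linarith)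
          have hcos1 : Real.cos ((r₁ + r)/2) ≤ 0 :=
            Real.cos_nonpos_of_pi_div_two_le_of_le (by linarith) (by linarith)
          nlinarith
        have hstep : -(Real.cos r / Real.sin r) ≤ 1 / Real.sin r := by
          rw [← neg_div]
          exact (div_le_div_iff_of_pos_right hs).mpr (by linarith [Real.neg_one_le_cos r])
        have : 1 / Real.sin r ≤ 1 / Real.sin r₁ := by
          apply one_div_le_one_div_of_le hs1 hsins
        linarith
    -- split the ODE into real and imaginary parts
    have hodeC := hode r h1 (by linarith)
    have hodeC' : u'' r = ((ν : ℝ) : ℂ) * u r - ((2*(n:ℝ)*(Real.cos r/Real.sin r) : ℝ) : ℂ) * u' r := by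
      rw [hodeC, hν]
      push_cast
      ring
    set μ : ℝ := 2*(n:ℝ)*(Real.cos r/Real.sin r) with hμ
    have hcre : (u'' r).re = ν * (u r).re - μ * (u' r).re := by
      rw [hodeC']
      simp [Complex.sub_re, Complex.re_ofReal_mul]
    have hcim : (u'' r).im = ν * (u r).im - μ * (u' r).im := by
      rw [hodeC']
      simp [Complex.sub_im, Complex.im_ofReal_mul]
    set a1 := (u r).re; set a2 := (u r).im
    set b1 := (u' r).re; set b2 := (u' r).im
    have hEr : E r = a1^2 + a2^2 + (b1^2 + b2^2) := rfl
    have hE'r : E' r = 2*(a1*b1 + a2*b2) + 2*(b1*(u'' r).re + b2*(u'' r).im) := rfl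
    rw [hEr, hE'r, hcre, hcim, hK]
    have hν0 : 0 ≤ 1 + ν := by rw [hν]; positivity
    have hn0 : (0:ℝ) ≤ 4*(n:ℝ) := by positivity
    have hμb : (4*(n:ℝ)) * ((-(Real.cos r/Real.sin r)) * (b1^2+b2^2))
        ≤ (4*(n:ℝ)) * ((1/Real.sin r₁) * (b1^2+b2^2)) := by
      apply mul_le_mul_of_nonneg_left ?_ hn0
      apply mul_le_mul_of_nonneg_right hcot (by positivity)
    have hsq1 : 0 ≤ (1+ν) * ((a1-b1)^2) := mul_nonneg hν0 (sq_nonneg _)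
    have hsq2 : 0 ≤ (1+ν) * ((a2-b2)^2) := mul_nonneg hν0 (sq_nonneg _)
    have hsq3 : 0 ≤ (4*(n:ℝ)/Real.sin r₁) * (a1^2+a2^2) := by positivity
    rw [hμ]
    ring_nf at hμb hsq1 hsq2 hsq3 ⊢
    linarith [hμb, hsq1, hsq2, hsq3]
  -- antitonicity of f
  have hanti : AntitoneOn f (Icc 0 r₁) := by
    apply antitoneOn_of_deriv_nonpos (convex_Icc 0 r₁)
    · exact fun x hx => ((hfd x (hIccII hx)).continuousAt).continuousWithinAt
    · intro x hx
      rw [interior_Icc] at hx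
      exact ((hfd x (hIccII ⟨hx.1.le, hx.2.le⟩)).differentiableAt).differentiableWithinAt
    · intro x hx
      rw [interior_Icc] at hx
      rw [(hfd x (hIccII ⟨hx.1.le, hx.2.le⟩)).deriv]
      have := hineq x hx.1 hx.2
      have hexp0 : 0 < Real.exp (-K * x) := Real.exp_pos _
      nlinarith
  have hE0 : E 0 = 0 := by rw [hE]; simp [h0, h0']
  have hf0 : f 0 = 0 := by rw [hf]; simp [hE0]
  have hfr : f r₀ ≤ 0 := by
    rw [← hf0]
    exact hanti ⟨le_refl 0, by linarith⟩ ⟨hr₀0, by linarith⟩ hr₀0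
  have hEr0 : E r₀ ≤ 0 := by
    have hexp0 : 0 < Real.exp (-K * r₀) := Real.exp_pos _
    rw [hf] at hfr
    by_contra h
    push_neg at h
    have := mul_pos h hexp0
    simp only at hfr
    linarith
  have h1 : (u r₀).re^2 + (u r₀).im^2 + ((u' r₀).re^2 + (u' r₀).im^2) ≤ 0 := hEr0
  have : (u r₀).re = 0 ∧ (u r₀).im = 0 := by constructor <;> nlinarith [sq_nonneg (u r₀).re, sq_nonneg (u r₀).im, sq_nonneg (u' r₀).re, sq_nonneg (u' r₀).im]
  exact Complex.ext this.1 this.2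

/-- `D̃* = L̃^n` maps `cosh (λ r)` to `c_{λ,n} φ_λ(ir)`, where `ψ(r) = φ_λ(ir)` is
the analytically continued spherical function of `H^{2n+1}`. -/
theorem stmt_12 (n : ℕ) (hn : 1 ≤ n) (lam : ℝ) (ψ : ℝ → ℂ)
    (hψ : ContDiffOn ℝ (⊤ : ℕ∞) ψ (Set.Ioo (-Real.pi) Real.pi))
    (heven : ∀ r : ℝ, ψ (-r) = ψ r) (h0 : ψ 0 = 1)
    (hode : ∀ r : ℝ, 0 < |r| → |r| < Real.pi →
      deriv (deriv ψ) r + 2 * (n : ℂ) * ((Real.cos r : ℂ) / (Real.sin r : ℂ)) * deriv ψ r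
        = (((lam : ℂ)) ^ 2 + (n : ℂ) ^ 2) * ψ r) :
    ∀ r : ℝ, 0 < |r| → |r| < Real.pi →
      Lsph^[n] (fun s => (Real.cosh (lam * s) : ℂ)) r = (cln n lam : ℂ) * ψ r := by
  obtain ⟨F, hFa, hFit, hFe, hF0, hFode⟩ := main_ind lam n
  set c : ℂ := (cln n lam : ℂ) with hc
  -- regularity of ψ
  have hψ1 : ContDiffOn ℝ (⊤ : ℕ∞) (deriv ψ) II :=
    hψ.deriv_of_isOpen hII_open (by simp)
  have hdψ : ∀ r ∈ II, HasDerivAt ψ (deriv ψ r) r := fun r hr =>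
    (((hψ.contDiffAt (hII_open.mem_nhds hr)).differentiableAt (by simp))).hasDerivAt
  have hdψ1 : ∀ r ∈ II, HasDerivAt (deriv ψ) (deriv (deriv ψ) r) r := fun r hr =>
    (((hψ1.contDiffAt (hII_open.mem_nhds hr)).differentiableAt (by simp))).hasDerivAt
  -- the difference function
  set u : ℝ → ℂ := fun r => F r - c * ψ r with hu
  set u' : ℝ → ℂ := fun r => deriv F r - c * deriv ψ r with hu'
  set u'' : ℝ → ℂ := fun r => deriv (deriv F) r - c * deriv (deriv ψ) r with hu''
  have hd1 : ∀ r ∈ II, HasDerivAt u (u' r) r := fun r hr =>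
    (((hFa r hr).differentiableAt).hasDerivAt).sub ((hdψ r hr).const_mul c)
  have hd2 : ∀ r ∈ II, HasDerivAt u' (u'' r) r := fun r hr =>
    ((((hFa.deriv) r hr).differentiableAt).hasDerivAt).sub ((hdψ1 r hr).const_mul c)
  have hodeu : ∀ r : ℝ, 0 < r → r < Real.pi →
      u'' r = ((lam:ℂ)^2+(n:ℂ)^2) * u r
        - 2*(n:ℂ)*((Real.cos r:ℂ)/(Real.sin r:ℂ)) * u' r := by
    intro r h1 h2
    have hrII : r ∈ II := ⟨by linarith [Real.pi_pos], h2⟩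
    have hF' := hFode r hrII (ne_of_gt h1)
    have hψ' := hode r (by rw [abs_of_pos h1]; exact h1) (by rwa [abs_of_pos h1])
    show deriv (deriv F) r - c * deriv (deriv ψ) r = _
    rw [hu', hu]
    linear_combination hF' - c * hψ'
  have h0u : u 0 = 0 := by rw [hu]; simp [hF0, h0]
  have h0u' : u' 0 = 0 := by
    have hF'0 : deriv F 0 = 0 := by
      have := deriv_odd hFa hFe 0 hII_zero
      simp only [neg_zero] at this
      linear_combination (1/2 : ℂ) * this
    have hψ'0 : deriv ψ 0 = 0 := by
      have heq : (fun s => ψ (-s)) = ψ := funext heven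
      have h1 : deriv (fun s => ψ (-s)) 0 = - deriv ψ (-0) := deriv_comp_neg ψ 0
      rw [heq, neg_zero] at h1
      linear_combination (1/2 : ℂ) * h1
    rw [hu']
    simp [hF'0, hψ'0]
  have huniq := uniq n lam u u' u'' hd1 hd2 hodeu h0u h0u'
  intro r hr0 hrπ
  have hrII : r ∈ II := ⟨by rcases abs_cases r with ⟨h,_⟩|⟨h,_⟩ <;> linarith, by
    rcases abs_cases r with ⟨h,_⟩|⟨h,_⟩ <;> linarith⟩
  have hrne : r ≠ 0 := by intro h; rw [h] at hr0; simp at hr0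
  rw [hFit r hrII hrne]
  rcases lt_or_gt_of_ne hrne with hneg | hpos
  · have habs : |r| = -r := abs_of_neg hneg
    have h1 : u (-r) = 0 := huniq (-r) (by linarith [abs_nonneg r, habs]) (by rw [← habs]; exact hrπ)
    have h2 : F (-r) - c * ψ (-r) = 0 := h1
    rw [hFe r hrII, heven r] at h2
    linear_combination h2
  · have habs : |r| = r := abs_of_pos hpos
    have h1 : u r = 0 := huniq r hpos.le (by rwa [← habs])
    have h2 : F r - c * ψ r = 0 := h1
    linear_combination h2
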